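/- Let G be a finite simple graph on n ≥ 1 vertices, identified with [n], and let M be a real symmetric (n+1)×(n+1) matrix with all entries nonnegative such that M_{1,i+1} = M_{i+1,i+1} = 1 for all i ∈ [n], Σ_{i∈S} M_{i+1,j+1} ≤ 1 for every clique S of G and every j ∈ [n], and M_{1,1} + Σ_{i∈S, j∈T} M_{i+1,j+1} ≥ |S| + |T| for all cliques S, T of G. Then M_{1,1} ≥ ω(G). In particular ω(G) ≤ ξ_SDP(G), where ξ_SDP(G) is the optimal value of the semidefinite program minimizing M_{1,1} over such positive semidefinite matrices M. -/

import Mathlib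

open scoped ComplexConjugate Matrix

/-- The standard (conjugate-linear in the first argument) inner product on `ι → ℂ`. -/
noncomputable def cdot {ι : Type} [Fintype ι] (x y : ι → ℂ) : ℂ :=
  ∑ i, conj (x i) * y i

/-- A `k`-dimensional (complex) orthogonal representation of a graph. -/
def IsOrthRep {V : Type} (G : SimpleGraph V) (k : ℕ) (ψ : V → Fin k → ℂ) : Prop :=
  (∀ v, cdot (ψ v) (ψ v) = 1) ∧ ∀ u v, G.Adj u v → cdot (ψ u) (ψ v) = 0

/-- The orthogonal rank `ξ(G)`: the least `k ≥ 1` admitting a `k`-dimensional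
orthogonal representation. -/
noncomputable def orthRank {V : Type} (G : SimpleGraph V) : ℕ :=
  sInf {k | 1 ≤ k ∧ ∃ ψ : V → Fin k → ℂ, IsOrthRep G k ψ}

/-- A quantum `k`-colouring of `G` on `ℂ^d`: projective measurements
`{E v c}_{c ∈ Fin k}` such that `E u c * E v c = 0` for adjacent `u, v`. -/
def IsQuantumColoring {V : Type} (G : SimpleGraph V) (k d : ℕ)
    (E : V → Fin k → Matrix (Fin d) (Fin d) ℂ) : Prop :=
  (∀ v c, (E v c).IsHermitian) ∧
  (∀ v c, E v c * E v c = E v c) ∧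
  (∀ v, ∑ c, E v c = 1) ∧
  ∀ u v, G.Adj u v → ∀ c, E u c * E v c = 0

/-- The quantum chromatic number `χ_q(G)`: the least `k ≥ 1` for which a quantum
`k`-colouring exists on `ℂ^d` for some `d ≥ 1`. -/
noncomputable def quantumChromaticNumber {V : Type} (G : SimpleGraph V) : ℕ :=
  sInf {k | 1 ≤ k ∧ ∃ d, 1 ≤ d ∧
    ∃ E : V → Fin k → Matrix (Fin d) (Fin d) ℂ, IsQuantumColoring G k d E}

/-- A rank-`r` quantum `k`-colouring: a quantum `k`-colouring on `ℂ^(r*k)` in which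
every projector has rank exactly `r`. -/
def IsRankRQuantumColoring {V : Type} (G : SimpleGraph V) (r k : ℕ)
    (E : V → Fin k → Matrix (Fin (r * k)) (Fin (r * k)) ℂ) : Prop :=
  IsQuantumColoring G k (r * k) E ∧ ∀ v c, (E v c).rank = r

/-- The rank-`r` quantum chromatic number `χ_q^{(r)}(G)`. -/
noncomputable def rankChromaticNumber {V : Type} (G : SimpleGraph V) (r : ℕ) : ℕ :=
  sInf {k | 1 ≤ k ∧ ∃ E : V → Fin k → Matrix (Fin (r * k)) (Fin (r * k)) ℂ,
    IsRankRQuantumColoring G r k E}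

/-- The chromatic number of `G` as a natural number: the least `k ≥ 1` for which a
proper `k`-colouring exists. -/
noncomputable def chromNat {V : Type} (G : SimpleGraph V) : ℕ :=
  sInf {k | 1 ≤ k ∧ G.Colorable k}

/-- The clique number `ω(G)`. -/
noncomputable def cliqueNum' {V : Type} (G : SimpleGraph V) : ℕ :=
  sSup {n | ∃ S : Finset V, G.IsNClique n S}

/-- Feasibility for the semidefinite program defining `ξ_SDP(G)`, for a graph on
vertex set `[n] = Fin n`; row/column `0` of `M` is the distinguished index. -/
def FeasibleSDP {n : ℕ} (G : SimpleGraph (Fin n))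
    (M : Matrix (Fin (n + 1)) (Fin (n + 1)) ℝ) : Prop :=
  M.IsSymm ∧ M.PosSemidef ∧
  (∀ i j, 0 ≤ M i j) ∧
  (∀ i : Fin n, M 0 i.succ = 1 ∧ M i.succ i.succ = 1) ∧
  (∀ S : Finset (Fin n), G.IsClique (S : Set (Fin n)) →
    ∀ j : Fin n, ∑ i ∈ S, M i.succ j.succ ≤ 1) ∧
  ∀ S T : Finset (Fin n), G.IsClique (S : Set (Fin n)) → G.IsClique (T : Set (Fin n)) →
    (S.card + T.card : ℝ) ≤ M 0 0 + ∑ i ∈ S, ∑ j ∈ T, M i.succ j.succ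

/-- `ξ_SDP(G)`: the optimal value of the semidefinite program minimizing `M 0 0`
over feasible matrices. -/
noncomputable def xiSDP {n : ℕ} (G : SimpleGraph (Fin n)) : ℝ :=
  sInf {x : ℝ | ∃ M, FeasibleSDP G M ∧ M 0 0 = x}


lemma sdp_clique_bound {n : ℕ} (G : SimpleGraph (Fin n))
    (M : Matrix (Fin (n + 1)) (Fin (n + 1)) ℝ)
    (hclique1 : ∀ S : Finset (Fin n), G.IsClique (S : Set (Fin n)) →
      ∀ j : Fin n, ∑ i ∈ S, M i.succ j.succ ≤ 1)
    (hclique2 : ∀ S T : Finset (Fin n), G.IsClique (S : Set (Fin n)) →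
      G.IsClique (T : Set (Fin n)) →
      (S.card + T.card : ℝ) ≤ M 0 0 + ∑ i ∈ S, ∑ j ∈ T, M i.succ j.succ)
    (S : Finset (Fin n)) (hS : G.IsClique (S : Set (Fin n))) :
    (S.card : ℝ) ≤ M 0 0 := by
  have h2 := hclique2 S S hS hS
  have hsum : ∑ i ∈ S, ∑ j ∈ S, M i.succ j.succ ≤ (S.card : ℝ) := by
    rw [Finset.sum_comm]
    calc ∑ j ∈ S, ∑ i ∈ S, M i.succ j.succ ≤ ∑ j ∈ S, 1 := by
          exact Finset.sum_le_sum fun j _ => hclique1 S hS j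
      _ = (S.card : ℝ) := by simp
  linarith


noncomputable def feasM (n : ℕ) : Matrix (Fin (n + 1)) (Fin (n + 1)) ℝ :=
  fun i j =>
    if i = 0 then (if j = 0 then (n : ℝ) else 1)
    else if j = 0 then 1 else if i = j then 1 else 0

lemma feasM_symm (n : ℕ) : (feasM n).IsSymm := by
  ext i j
  simp only [Matrix.transpose_apply, feasM]
  rcases eq_or_ne i 0 with hi | hi <;> rcases eq_or_ne j 0 with hj | hj <;>
    simp [hi, hj, eq_comm]

lemma feasM_quadform (n : ℕ) (x : Fin (n + 1) → ℝ) :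
    x ⬝ᵥ (feasM n).mulVec x = ∑ i : Fin n, (x 0 + x i.succ)^2 := by
  have hmv0 : (feasM n).mulVec x 0 = (n : ℝ) * x 0 + ∑ i : Fin n, x i.succ := by
    simp [Matrix.mulVec, dotProduct, feasM, Fin.sum_univ_succ, Fin.succ_ne_zero]
  have hmvs : ∀ i : Fin n, (feasM n).mulVec x i.succ = x 0 + x i.succ := by
    intro i
    simp [Matrix.mulVec, dotProduct, feasM, Fin.sum_univ_succ, Fin.succ_ne_zero,
      Fin.succ_inj, Finset.sum_ite_eq', Finset.mem_univ]
  rw [dotProduct, Fin.sum_univ_succ, hmv0]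
  have h1 : ∑ i : Fin n, x i.succ * (feasM n).mulVec x i.succ
      = ∑ i : Fin n, x i.succ * (x 0 + x i.succ) := by
    exact Finset.sum_congr rfl fun i _ => by rw [hmvs]
  rw [h1]
  have : x 0 * ((n : ℝ) * x 0 + ∑ i : Fin n, x i.succ)
      = ∑ i : Fin n, (x 0 * x 0 + x 0 * x i.succ) := by
    rw [Finset.sum_add_distrib, Finset.sum_const, ← Finset.mul_sum, Finset.card_univ,
      Fintype.card_fin, nsmul_eq_mul]
    ring
  rw [this, ← Finset.sum_add_distrib]
  exact Finset.sum_congr rfl fun i _ => by ring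

lemma feasM_psd (n : ℕ) : (feasM n).PosSemidef := by
  rw [Matrix.posSemidef_iff_dotProduct_mulVec]
  constructor
  · rw [Matrix.IsHermitian, Matrix.conjTranspose_eq_transpose_of_trivial]
    exact feasM_symm n
  · intro x
    rw [show (star x : Fin (n+1) → ℝ) = x from rfl, feasM_quadform]
    exact Finset.sum_nonneg fun i _ => sq_nonneg _

lemma feasM_feasible {n : ℕ} (G : SimpleGraph (Fin n)) : FeasibleSDP G (feasM n) := by
  refine ⟨feasM_symm n, feasM_psd n, ?_, ?_, ?_, ?_⟩
  · intro i j
    simp only [feasM]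
    split_ifs <;> positivity
  · intro i
    constructor <;> simp [feasM, Fin.succ_ne_zero]
  · intro S hS j
    have : ∀ i ∈ S, feasM n i.succ j.succ = if i = j then 1 else 0 := by
      intro i _
      simp [feasM, Fin.succ_ne_zero, Fin.succ_inj]
    rw [Finset.sum_congr rfl this, Finset.sum_ite_eq' S j (fun _ => (1:ℝ))]
    split_ifs <;> norm_num
  · intro S T hS hT
    have hST : ∀ i ∈ S, ∑ j ∈ T, feasM n i.succ j.succ = if i ∈ T then (1:ℝ) else 0 := by
      intro i _
      have : ∀ j ∈ T, feasM n i.succ j.succ = if j = i then 1 else 0 := by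
        intro j _
        simp [feasM, Fin.succ_ne_zero, Fin.succ_inj, eq_comm]
      rw [Finset.sum_congr rfl this, Finset.sum_ite_eq' T i (fun _ => (1:ℝ))]
    rw [Finset.sum_congr rfl hST, Finset.sum_ite_mem, Finset.sum_const, nsmul_eq_mul, mul_one]
    have h00 : feasM n 0 0 = (n : ℝ) := by simp [feasM]
    rw [h00]
    have hcard : S.card + T.card = (S ∪ T).card + (S ∩ T).card :=
      (Finset.card_union_add_card_inter S T).symm
    have hun : (S ∪ T).card ≤ n := le_trans (Finset.card_le_univ _) (by simp)
    have hcardR : (S.card : ℝ) + T.card = ((S ∪ T).card : ℝ) + (S ∩ T).card := by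
      exact_mod_cast hcard
    have hunR : ((S ∪ T).card : ℝ) ≤ (n : ℝ) := by exact_mod_cast hun
    linarith

lemma cliqueNum'_exists {n : ℕ} (hn : 1 ≤ n) (G : SimpleGraph (Fin n)) :
    ∃ S : Finset (Fin n), G.IsNClique (cliqueNum' G) S := by
  have hbdd : BddAbove {m | ∃ S : Finset (Fin n), G.IsNClique m S} := by
    refine ⟨n, fun m hm => ?_⟩
    obtain ⟨S, hS⟩ := hm
    calc m = S.card := hS.card_eq.symm
      _ ≤ (Finset.univ : Finset (Fin n)).card := Finset.card_le_univ S
      _ = n := by simp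
  have hne : {m | ∃ S : Finset (Fin n), G.IsNClique m S}.Nonempty :=
    ⟨0, ∅, by simp⟩
  exact Nat.sSup_mem hne hbdd

lemma cliqueNum'_le {n : ℕ} (hn : 1 ≤ n) (G : SimpleGraph (Fin n))
    (M : Matrix (Fin (n + 1)) (Fin (n + 1)) ℝ)
    (hclique1 : ∀ S : Finset (Fin n), G.IsClique (S : Set (Fin n)) →
      ∀ j : Fin n, ∑ i ∈ S, M i.succ j.succ ≤ 1)
    (hclique2 : ∀ S T : Finset (Fin n), G.IsClique (S : Set (Fin n)) →
      G.IsClique (T : Set (Fin n)) →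
      (S.card + T.card : ℝ) ≤ M 0 0 + ∑ i ∈ S, ∑ j ∈ T, M i.succ j.succ) :
    (cliqueNum' G : ℝ) ≤ M 0 0 := by
  obtain ⟨S, hS⟩ := cliqueNum'_exists hn G
  have := sdp_clique_bound G M hclique1 hclique2 S hS.isClique
  rwa [hS.card_eq] at this


/-- any symmetric entrywise-nonnegative matrix satisfying the linear
constraints of the SDP has `M 0 0 ≥ ω(G)`; in particular `ω(G) ≤ ξ_SDP(G)`. -/
theorem cliqueNum_le_xiSDP {n : ℕ} (hn : 1 ≤ n) (G : SimpleGraph (Fin n))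
    (M : Matrix (Fin (n + 1)) (Fin (n + 1)) ℝ)
    (hsymm : M.IsSymm)
    (hnonneg : ∀ i j, 0 ≤ M i j)
    (hone : ∀ i : Fin n, M 0 i.succ = 1 ∧ M i.succ i.succ = 1)
    (hclique1 : ∀ S : Finset (Fin n), G.IsClique (S : Set (Fin n)) →
      ∀ j : Fin n, ∑ i ∈ S, M i.succ j.succ ≤ 1)
    (hclique2 : ∀ S T : Finset (Fin n), G.IsClique (S : Set (Fin n)) →
      G.IsClique (T : Set (Fin n)) →
      (S.card + T.card : ℝ) ≤ M 0 0 + ∑ i ∈ S, ∑ j ∈ T, M i.succ j.succ) :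
    (cliqueNum' G : ℝ) ≤ M 0 0 ∧ (cliqueNum' G : ℝ) ≤ xiSDP G := by
  have h1 : (cliqueNum' G : ℝ) ≤ M 0 0 := cliqueNum'_le hn G M hclique1 hclique2
  refine ⟨h1, ?_⟩
  apply le_csInf
  · exact ⟨feasM n 0 0, feasM n, feasM_feasible G, rfl⟩
  · rintro x ⟨N, ⟨_, _, _, _, hN1, hN2⟩, rfl⟩
    exact cliqueNum'_le hn G N hN1 hN2
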